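/- Let v ∈ H¹(0,∞) and let r be absolutely continuous on [0,∞) with r(0) > 0 and 0 < θ̲ ≤ r²∂ₓr ≤ θ̄ < ∞ for constants θ̲, θ̄. Then ∫₀^∞ (r²∂ₓr)⁻¹ (∂ₓ(r²v))² dx + 2 r(0) v(0)² = ∫₀^∞ (r²∂ₓr)⁻¹ (r²∂ₓv)² dx + 2 ∫₀^∞ (r²∂ₓr) r⁻² v² dx. -/

import Mathlib

open MeasureTheory Set Filter

lemma mono_aux (f f' : ℝ → ℝ) (hf : ∀ x ∈ Ici (0:ℝ), HasDerivAt f (f' x) x)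
    (h0 : ∀ x ∈ Ici (0:ℝ), 0 ≤ f' x) : MonotoneOn f (Ici 0) := by
  apply monotoneOn_of_deriv_nonneg (convex_Ici 0)
  · exact fun x hx => (hf x hx).continuousAt.continuousWithinAt
  · intro x hx
    rw [interior_Ici] at hx
    exact (hf x (mem_Ici.2 (le_of_lt hx))).differentiableAt.differentiableWithinAt
  · intro x hx
    rw [interior_Ici] at hx
    rw [(hf x (mem_Ici.2 hx.le)).deriv]
    exact h0 x (mem_Ici.2 hx.le)

lemma cube_bounds (r r' : ℝ → ℝ) (θ₁ θ₂ : ℝ)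
    (hr : ∀ x ∈ Ici (0:ℝ), HasDerivAt r (r' x) x)
    (hlb : ∀ x ∈ Ici (0:ℝ), θ₁ ≤ (r x)^2 * r' x)
    (hub : ∀ x ∈ Ici (0:ℝ), (r x)^2 * r' x ≤ θ₂) :
    ∀ x ∈ Ici (0:ℝ), (r 0)^3 + 3*θ₁*x ≤ (r x)^3 ∧ (r x)^3 ≤ (r 0)^3 + 3*θ₂*x := by
  intro x hx
  have h1 : MonotoneOn (fun x => (r x)^3 - 3*θ₁*x) (Ici 0) := by
    apply mono_aux _ (fun x => 3*((r x)^2 * r' x) - 3*θ₁)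
    · intro x hx
      have := ((hr x hx).pow 3).sub ((hasDerivAt_id x).const_mul (3*θ₁))
      refine this.congr_deriv ?_
      ring
    · intro x hx
      have := hlb x hx
      linarith
  have h2 : MonotoneOn (fun x => 3*θ₂*x - (r x)^3) (Ici 0) := by
    apply mono_aux _ (fun x => 3*θ₂ - 3*((r x)^2 * r' x))
    · intro x hx
      have := ((hasDerivAt_id x).const_mul (3*θ₂)).sub ((hr x hx).pow 3)
      refine this.congr_deriv ?_
      ring
    · intro x hx
      have := hub x hx
      linarith
  have e1 := h1 (self_mem_Ici) hx hx
  have e2 := h2 (self_mem_Ici) hx hx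
  constructor <;> simp at e1 e2 <;> linarith

/-- Weighted elliptic identity (Lemma 2.1, identity (div-grd)). -/
theorem weighted_elliptic_identity
    (v v' r r' : ℝ → ℝ) (θ₁ θ₂ : ℝ)
    (hv : ∀ x ∈ Ici (0:ℝ), HasDerivAt v (v' x) x)
    (hr : ∀ x ∈ Ici (0:ℝ), HasDerivAt r (r' x) x)
    (hr0 : 0 < r 0)
    (hθ₁ : 0 < θ₁)
    (hlb : ∀ x ∈ Ici (0:ℝ), θ₁ ≤ (r x)^2 * r' x)
    (hub : ∀ x ∈ Ici (0:ℝ), (r x)^2 * r' x ≤ θ₂)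
    (hvL2 : MemLp v 2 (volume.restrict (Ioi 0)))
    (hvxL2 : MemLp (fun x => (r x)^2 * v' x) 2 (volume.restrict (Ioi 0))) :
    (∫ x in Ioi (0:ℝ), ((r x)^2 * r' x)⁻¹ * (2 * r x * r' x * v x + (r x)^2 * v' x)^2)
      + 2 * r 0 * (v 0)^2
    = (∫ x in Ioi (0:ℝ), ((r x)^2 * r' x)⁻¹ * ((r x)^2 * v' x)^2)
      + 2 * ∫ x in Ioi (0:ℝ), ((r x)^2 * r' x) * ((r x)^2)⁻¹ * (v x)^2 := by
  have hθ₂ : 0 < θ₂ := lt_of_lt_of_le hθ₁ ((hlb 0 self_mem_Ici).trans (hub 0 self_mem_Ici))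
  have hcube := cube_bounds r r' θ₁ θ₂ hr hlb hub
  have hrlb : ∀ x ∈ Ici (0:ℝ), r 0 ≤ r x := by
    intro x hx
    have h := (hcube x hx).1
    have hx0 : (0:ℝ) ≤ x := hx
    have h3 : (r 0)^3 ≤ (r x)^3 := by nlinarith
    exact (Odd.strictMono_pow (R := ℝ) (n := 3) ⟨1, by norm_num⟩).le_iff_le.mp h3
  have hrpos : ∀ x ∈ Ici (0:ℝ), 0 < r x := fun x hx => lt_of_lt_of_le hr0 (hrlb x hx)
  have hr'pos : ∀ x ∈ Ici (0:ℝ), 0 < r' x := by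
    intro x hx
    have h1 := hlb x hx
    have h2 := hrpos x hx
    nlinarith [sq_nonneg (r x)]
  -- measurability
  have hrc : ContinuousOn r (Ioi (0:ℝ)) :=
    fun x hx => ((hr x (mem_Ici.2 (le_of_lt hx))).continuousAt).continuousWithinAt
  have hvc : ContinuousOn v (Ioi (0:ℝ)) :=
    fun x hx => ((hv x (mem_Ici.2 (le_of_lt hx))).continuousAt).continuousWithinAt
  have hrm : AEMeasurable r (volume.restrict (Ioi 0)) := hrc.aemeasurable measurableSet_Ioi
  have hvm : AEMeasurable v (volume.restrict (Ioi 0)) := hvc.aemeasurable measurableSet_Ioi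
  have hr'm : AEMeasurable r' (volume.restrict (Ioi 0)) := by
    apply (measurable_deriv r).aemeasurable.congr
    filter_upwards [ae_restrict_mem measurableSet_Ioi] with x hx
    exact (hr x (mem_Ici.2 (le_of_lt hx))).deriv
  have hv'm : AEMeasurable v' (volume.restrict (Ioi 0)) := by
    apply (measurable_deriv v).aemeasurable.congr
    filter_upwards [ae_restrict_mem measurableSet_Ioi] with x hx
    exact (hv x (mem_Ici.2 (le_of_lt hx))).deriv
  have hr2m : AEMeasurable (fun x => (r x)^2) (volume.restrict (Ioi 0)) := hrm.pow_const 2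
  have hwm : AEMeasurable (fun x => (r x)^2 * v' x) (volume.restrict (Ioi 0)) := hr2m.mul hv'm
  -- basic integrabilities
  have hIv2 : Integrable (fun x => v x ^ 2) (volume.restrict (Ioi 0)) := hvL2.integrable_sq
  have hIw2 : Integrable (fun x => ((r x)^2 * v' x) ^ 2) (volume.restrict (Ioi 0)) :=
    hvxL2.integrable_sq
  have hIvw : Integrable (fun x => v x * ((r x)^2 * v' x)) (volume.restrict (Ioi 0)) := by
    have h := hvxL2.smul (r := 1) (hpqr := inferInstance) hvL2
    rw [memLp_one_iff_integrable] at h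
    exact h
  -- integrability of B
  have hBint : Integrable (fun x => ((r x)^2 * r' x)⁻¹ * ((r x)^2 * v' x)^2)
      (volume.restrict (Ioi 0)) := by
    apply Integrable.mono' (hIw2.const_mul θ₁⁻¹)
    · exact (((hr2m.mul hr'm).inv).mul (hwm.pow_const 2)).aestronglyMeasurable
    · filter_upwards [ae_restrict_mem measurableSet_Ioi] with x hx
      have h1 := hlb x (mem_Ici.2 (le_of_lt hx))
      have hpos : (0:ℝ) < (r x)^2 * r' x := lt_of_lt_of_le hθ₁ h1
      rw [Real.norm_eq_abs, abs_of_nonneg (by positivity)]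
      have hinv : ((r x)^2 * r' x)⁻¹ ≤ θ₁⁻¹ := inv_anti₀ hθ₁ h1
      exact mul_le_mul_of_nonneg_right hinv (sq_nonneg _)
  -- integrability of C
  have hCint : Integrable (fun x => ((r x)^2 * r' x) * ((r x)^2)⁻¹ * (v x)^2)
      (volume.restrict (Ioi 0)) := by
    apply Integrable.mono' (hIv2.const_mul (θ₂ * ((r 0)^2)⁻¹))
    · exact (((hr2m.mul hr'm).mul hr2m.inv).mul (hvm.pow_const 2)).aestronglyMeasurable
    · filter_upwards [ae_restrict_mem measurableSet_Ioi] with x hx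
      have h1 := hlb x (mem_Ici.2 (le_of_lt hx))
      have h2 := hub x (mem_Ici.2 (le_of_lt hx))
      have h3 := hrlb x (mem_Ici.2 (le_of_lt hx))
      have h4 := hrpos x (mem_Ici.2 (le_of_lt hx))
      have h5 := hr'pos x (mem_Ici.2 (le_of_lt hx))
      have hpos : (0:ℝ) < (r x)^2 * r' x := lt_of_lt_of_le hθ₁ h1
      rw [Real.norm_eq_abs, abs_of_nonneg (by positivity)]
      have hsq : (r 0)^2 ≤ (r x)^2 := by nlinarith
      have hinv : ((r x)^2)⁻¹ ≤ ((r 0)^2)⁻¹ := inv_anti₀ (by positivity) hsq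
      have hmm : ((r x)^2 * r' x) * ((r x)^2)⁻¹ ≤ θ₂ * ((r 0)^2)⁻¹ :=
        mul_le_mul h2 hinv (by positivity) hθ₂.le
      exact mul_le_mul_of_nonneg_right hmm (sq_nonneg _)
  -- the boundary function g and its derivative G
  obtain ⟨g, hgdef⟩ : ∃ g : ℝ → ℝ, g = fun x => 2 * r x * v x ^ 2 := ⟨_, rfl⟩
  obtain ⟨G, hGdef⟩ : ∃ G : ℝ → ℝ,
      G = fun x => 2 * r' x * v x ^ 2 + 4 * (v x * ((r x)^2 * v' x)) * (r x)⁻¹ := ⟨_, rfl⟩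
  have hgd : ∀ x ∈ Ici (0:ℝ), HasDerivAt g (G x) x := by
    intro x hx
    have h := ((hr x hx).const_mul 2).mul ((hv x hx).pow 2)
    have hrne : r x ≠ 0 := (hrpos x hx).ne'
    rw [hgdef, hGdef]
    refine h.congr_deriv ?_
    field_simp
    rw [Pi.pow_apply]
    ring
  have hGint : Integrable G (volume.restrict (Ioi 0)) := by
    apply Integrable.mono'
      ((hIv2.const_mul (2 * (θ₂ * ((r 0)^2)⁻¹))).add ((hIvw.norm.const_mul (4 * (r 0)⁻¹))))
    · rw [hGdef]
      exact (((aemeasurable_const.mul hr'm).mul (hvm.pow_const 2)).add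
        (((aemeasurable_const.mul (hvm.mul hwm))).mul hrm.inv)).aestronglyMeasurable
    · filter_upwards [ae_restrict_mem measurableSet_Ioi] with x hx
      have h2 := hub x (mem_Ici.2 (le_of_lt hx))
      have h3 := hrlb x (mem_Ici.2 (le_of_lt hx))
      have h4 := hrpos x (mem_Ici.2 (le_of_lt hx))
      have h5 := hr'pos x (mem_Ici.2 (le_of_lt hx))
      have hsq : (r 0)^2 ≤ (r x)^2 := by nlinarith
      have hr'ub : r' x ≤ θ₂ * ((r 0)^2)⁻¹ := by
        rw [← div_eq_mul_inv, le_div_iff₀ (by positivity)]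
        nlinarith [mul_le_mul_of_nonneg_right hsq h5.le]
      have hinv : (r x)⁻¹ ≤ (r 0)⁻¹ := inv_anti₀ hr0 h3
      have hb1 : ‖2 * r' x * v x ^ 2‖ ≤ 2 * (θ₂ * ((r 0)^2)⁻¹) * v x ^ 2 := by
        rw [Real.norm_eq_abs, abs_of_nonneg (by positivity)]
        nlinarith [sq_nonneg (v x)]
      have hb2 : ‖4 * (v x * ((r x)^2 * v' x)) * (r x)⁻¹‖
          ≤ 4 * (r 0)⁻¹ * ‖v x * ((r x)^2 * v' x)‖ := by
        rw [Real.norm_eq_abs, abs_mul, abs_mul, abs_inv, abs_of_nonneg h4.le,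
          abs_of_nonneg (by norm_num : (0:ℝ) ≤ 4), Real.norm_eq_abs]
        nlinarith [abs_nonneg (v x * ((r x)^2 * v' x)),
          mul_le_mul_of_nonneg_left hinv (abs_nonneg (v x * ((r x)^2 * v' x)))]
      calc ‖G x‖ ≤ ‖2 * r' x * v x ^ 2‖ + ‖4 * (v x * ((r x)^2 * v' x)) * (r x)⁻¹‖ := by
            rw [hGdef]; exact norm_add_le _ _
        _ ≤ 2 * (θ₂ * ((r 0)^2)⁻¹) * v x ^ 2 + 4 * (r 0)⁻¹ * ‖v x * ((r x)^2 * v' x)‖ :=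
            add_le_add hb1 hb2
  -- g tends to a limit L at infinity
  obtain ⟨L, hLdef⟩ : ∃ L : ℝ, L = g 0 + ∫ x in Ioi (0:ℝ), G x := ⟨_, rfl⟩
  have hglim : Tendsto g atTop (nhds L) := by
    have h2 : Tendsto (fun x : ℝ => ∫ t in (0:ℝ)..x, G t) atTop (nhds (∫ t in Ioi (0:ℝ), G t)) :=
      intervalIntegral_tendsto_integral_Ioi 0 hGint tendsto_id
    have h3 : ∀ᶠ x in atTop, g 0 + ∫ t in (0:ℝ)..x, G t = g x := by
      filter_upwards [eventually_ge_atTop (0:ℝ)] with x hx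
      have heq : ∫ t in (0:ℝ)..x, G t = g x - g 0 := by
        apply intervalIntegral.integral_eq_sub_of_hasDerivAt
        · intro t ht
          rw [uIcc_of_le hx] at ht
          exact hgd t ht.1
        · rw [intervalIntegrable_iff]
          exact IntegrableOn.mono_set hGint (by rw [uIoc_of_le hx]; exact Ioc_subset_Ioi_self)
      rw [heq]; ring
    rw [hLdef]
    exact Tendsto.congr' h3 (tendsto_const_nhds.add h2)
  -- the limit is zero
  have hL0 : L = 0 := by
    have hnonneg : 0 ≤ L := by
      apply ge_of_tendsto hglim
      filter_upwards [eventually_ge_atTop (0:ℝ)] with x hx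
      have h1 := hrpos x hx
      have h2 := sq_nonneg (v x)
      simp only [hgdef]
      nlinarith
    rcases eq_or_lt_of_le hnonneg with h | hLpos
    · exact h.symm
    exfalso
    obtain ⟨N, hN⟩ := eventually_atTop.1
      ((hglim.eventually (eventually_ge_nhds (by linarith : L/2 < L))).and
        (eventually_ge_atTop (1:ℝ)))
    obtain ⟨M, hMdef⟩ : ∃ M : ℝ, M = max N 1 := ⟨_, rfl⟩
    have hM1 : (1:ℝ) ≤ M := hMdef ▸ le_max_right _ _
    have hM0 : (0:ℝ) < M := lt_of_lt_of_le one_pos hM1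
    obtain ⟨K, hKdef⟩ : ∃ K : ℝ, K = (r 0)^3 + 3*θ₂ := ⟨_, rfl⟩
    have hK : (0:ℝ) < K := by
      have := pow_pos hr0 3
      rw [hKdef]; nlinarith
    obtain ⟨c, hcdef⟩ : ∃ c : ℝ, c = L/4 * K ^ (-(1/3) : ℝ) := ⟨_, rfl⟩
    have hc : 0 < c := by
      have := Real.rpow_pos_of_pos hK (-(1/3) : ℝ)
      rw [hcdef]; positivity
    have key : ∀ x ∈ Ioi M, c * x ^ (-(1/3):ℝ) ≤ v x ^ 2 := by
      intro x hx
      have hxN : N ≤ x := le_trans (hMdef ▸ le_max_left N 1) (le_of_lt hx)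
      obtain ⟨hgx, hx1⟩ := hN x hxN
      have hx0 : (0:ℝ) < x := lt_of_lt_of_le one_pos hx1
      have hxI : x ∈ Ici (0:ℝ) := hx0.le
      have hrpx : 0 < r x := hrpos x hxI
      have hrx3 : (r x)^3 ≤ K * x := by
        have h := (hcube x hxI).2
        have := pow_pos hr0 3
        rw [hKdef]
        nlinarith
      have hrx : r x ≤ (K*x) ^ ((1:ℝ)/3) := by
        have h1 : r x = ((r x)^3 : ℝ) ^ ((1:ℝ)/3) := by
          rw [← Real.rpow_natCast (r x) 3, ← Real.rpow_mul hrpx.le]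
          norm_num
        rw [h1]
        exact Real.rpow_le_rpow (by positivity) hrx3 (by norm_num)
      have h5 : L/4 * (r x)⁻¹ ≤ v x ^ 2 := by
        have h6 : L / 4 ≤ v x ^ 2 * r x := by
          simp only [hgdef] at hgx
          nlinarith
        calc L/4 * (r x)⁻¹ ≤ (v x ^ 2 * r x) * (r x)⁻¹ :=
              mul_le_mul_of_nonneg_right h6 (inv_nonneg.2 hrpx.le)
          _ = v x ^ 2 := by field_simp
      have h6 : ((K*x) ^ ((1:ℝ)/3))⁻¹ ≤ (r x)⁻¹ := inv_anti₀ hrpx hrx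
      have h7 : c * x ^ (-(1/3):ℝ) = L/4 * ((K*x) ^ ((1:ℝ)/3))⁻¹ := by
        rw [Real.mul_rpow hK.le hx0.le, mul_inv, ← Real.rpow_neg hK.le, ← Real.rpow_neg hx0.le,
          hcdef]
        ring
      rw [h7]
      calc L/4 * ((K*x) ^ ((1:ℝ)/3))⁻¹ ≤ L/4 * (r x)⁻¹ :=
            mul_le_mul_of_nonneg_left h6 (by linarith)
        _ ≤ v x ^ 2 := h5
    -- contradiction with integrability of v²
    have hIv2M : IntegrableOn (fun x => v x ^ 2) (Ioi M) volume :=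
      IntegrableOn.mono_set hIv2 (Ioi_subset_Ioi hM0.le)
    have hint : IntegrableOn (fun x => c * x ^ (-(1/3):ℝ)) (Ioi M) volume := by
      apply Integrable.mono' hIv2M
      · apply ContinuousOn.aestronglyMeasurable _ measurableSet_Ioi
        apply continuousOn_const.mul
        apply ContinuousOn.rpow_const continuousOn_id
        intro x hx
        exact Or.inl (ne_of_gt (lt_trans hM0 hx))
      · filter_upwards [ae_restrict_mem measurableSet_Ioi] with x hx
        have hx0 : (0:ℝ) < x := lt_trans hM0 hx
        rw [Real.norm_eq_abs, abs_of_nonneg (by positivity)]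
        exact key x hx
    have hint2 : IntegrableOn (fun x : ℝ => x ^ (-(1/3):ℝ)) (Ioi M) volume := by
      have h := hint.const_mul c⁻¹
      have heq : (fun x : ℝ => c⁻¹ * (c * x ^ (-(1/3):ℝ))) = fun x : ℝ => x ^ (-(1/3):ℝ) := by
        funext x
        rw [← mul_assoc, inv_mul_cancel₀ hc.ne']
        ring
      rwa [heq] at h
    rw [integrableOn_Ioi_rpow_iff hM0] at hint2
    norm_num at hint2
  -- FTC on the half line
  have hFTC : ∫ x in Ioi (0:ℝ), G x = 0 - g 0 := by
    apply integral_Ioi_of_hasDerivAt_of_tendsto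
      ((hgd 0 self_mem_Ici).continuousAt.continuousWithinAt)
      (fun x hx => hgd x (mem_Ici.2 (le_of_lt hx))) hGint
    rw [← hL0]
    exact hglim
  -- pointwise identity
  have hAeq : (fun x => ((r x)^2 * r' x)⁻¹ * (2 * r x * r' x * v x + (r x)^2 * v' x)^2)
      =ᵐ[volume.restrict (Ioi 0)]
      (fun x => (((r x)^2 * r' x)⁻¹ * ((r x)^2 * v' x)^2
        + 2 * (((r x)^2 * r' x) * ((r x)^2)⁻¹ * (v x)^2)) + G x) := by
    filter_upwards [ae_restrict_mem measurableSet_Ioi] with x hx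
    have hrne : r x ≠ 0 := (hrpos x (mem_Ici.2 (le_of_lt hx))).ne'
    have hr'ne : r' x ≠ 0 := (hr'pos x (mem_Ici.2 (le_of_lt hx))).ne'
    rw [hGdef]
    field_simp
    ring
  have e1 : ∫ x in Ioi (0:ℝ), ((((r x)^2 * r' x)⁻¹ * ((r x)^2 * v' x)^2
        + 2 * (((r x)^2 * r' x) * ((r x)^2)⁻¹ * (v x)^2)) + G x)
      = (∫ x in Ioi (0:ℝ), (((r x)^2 * r' x)⁻¹ * ((r x)^2 * v' x)^2
        + 2 * (((r x)^2 * r' x) * ((r x)^2)⁻¹ * (v x)^2)))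
        + ∫ x in Ioi (0:ℝ), G x :=
    integral_add (hBint.add (hCint.const_mul 2)) hGint
  have e2 : ∫ x in Ioi (0:ℝ), (((r x)^2 * r' x)⁻¹ * ((r x)^2 * v' x)^2
        + 2 * (((r x)^2 * r' x) * ((r x)^2)⁻¹ * (v x)^2))
      = (∫ x in Ioi (0:ℝ), ((r x)^2 * r' x)⁻¹ * ((r x)^2 * v' x)^2)
        + ∫ x in Ioi (0:ℝ), 2 * (((r x)^2 * r' x) * ((r x)^2)⁻¹ * (v x)^2) :=
    integral_add hBint (hCint.const_mul 2)
  have e3 : ∫ x in Ioi (0:ℝ), 2 * (((r x)^2 * r' x) * ((r x)^2)⁻¹ * (v x)^2)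
      = 2 * ∫ x in Ioi (0:ℝ), ((r x)^2 * r' x) * ((r x)^2)⁻¹ * (v x)^2 :=
    integral_const_mul 2 _
  have hg0 : g 0 = 2 * r 0 * v 0 ^ 2 := by rw [hgdef]
  rw [integral_congr_ae hAeq, e1, e2, e3, hFTC, hg0]
  ring
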